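/- If C : (0,∞) → ℝ is twice differentiable, nonvanishing, and satisfies C''(s) = (C'(s))²/C(s) − C'(s)/s + C(s)²/s + α/s² − 1/(s²C(s)), then Y(x) := (x/2)·C(x²/8) satisfies Y'' = (Y')²/Y − Y'/x + Y²/x − 1/Y + 2α/x on (0,∞). -/

import Mathlib

open Real

theorem painleve_transform_C_to_Y (α : ℝ) (C : ℝ → ℝ)
    (hC1 : ∀ s ∈ Set.Ioi (0 : ℝ), DifferentiableAt ℝ C s)
    (hC2 : ∀ s ∈ Set.Ioi (0 : ℝ), DifferentiableAt ℝ (deriv C) s)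
    (hC0 : ∀ s ∈ Set.Ioi (0 : ℝ), C s ≠ 0)
    (hode : ∀ s ∈ Set.Ioi (0 : ℝ), deriv (deriv C) s =
      (deriv C s) ^ 2 / C s - deriv C s / s + (C s) ^ 2 / s + α / s ^ 2
        - 1 / (s ^ 2 * C s)) :
    ∀ x ∈ Set.Ioi (0 : ℝ),
      deriv (deriv (fun u => (u / 2) * C (u ^ 2 / 8))) x =
        (deriv (fun u => (u / 2) * C (u ^ 2 / 8)) x) ^ 2 / ((x / 2) * C (x ^ 2 / 8))
          - deriv (fun u => (u / 2) * C (u ^ 2 / 8)) x / x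
          + ((x / 2) * C (x ^ 2 / 8)) ^ 2 / x
          - 1 / ((x / 2) * C (x ^ 2 / 8)) + 2 * α / x := by
  intro x hx
  have hx0 : (0 : ℝ) < x := hx
  -- first derivative formula, at any y > 0
  have hq : ∀ y : ℝ, HasDerivAt (fun u : ℝ => u ^ 2 / 8) (y / 4) y := by
    intro y
    have h := (hasDerivAt_pow 2 y).div_const 8
    convert h using 1
    · rfl
    · rfl
    simp
    ring
  have key : ∀ y ∈ Set.Ioi (0 : ℝ),
      HasDerivAt (fun u => (u / 2) * C (u ^ 2 / 8))
        (C (y ^ 2 / 8) / 2 + (y ^ 2 / 8) * deriv C (y ^ 2 / 8)) y := by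
    intro y hy
    have hy0 : (0 : ℝ) < y := hy
    have hsy : (0 : ℝ) < y ^ 2 / 8 := by positivity
    have hC : HasDerivAt C (deriv C (y ^ 2 / 8)) (y ^ 2 / 8) :=
      (hC1 _ hsy).hasDerivAt
    have hcomp := hC.comp y (hq y)
    have hid : HasDerivAt (fun u : ℝ => u / 2) (1 / 2) y := by
      simpa using (hasDerivAt_id y).div_const 2
    have hmul := hid.mul hcomp
    convert hmul using 1
    · rfl
    · rfl
    · rfl
    simp only [Function.comp]
    ring
  have hderiv1 : ∀ y ∈ Set.Ioi (0 : ℝ),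
      deriv (fun u => (u / 2) * C (u ^ 2 / 8)) y =
        C (y ^ 2 / 8) / 2 + (y ^ 2 / 8) * deriv C (y ^ 2 / 8) := by
    intro y hy
    exact (key y hy).deriv
  -- deriv Y agrees with g near x
  have heq : deriv (fun u => (u / 2) * C (u ^ 2 / 8)) =ᶠ[nhds x]
      (fun y => C (y ^ 2 / 8) / 2 + (y ^ 2 / 8) * deriv C (y ^ 2 / 8)) := by
    filter_upwards [isOpen_Ioi.mem_nhds hx] with y hy using hderiv1 y hy
  have hsx : (0 : ℝ) < x ^ 2 / 8 := by positivity
  have hC : HasDerivAt C (deriv C (x ^ 2 / 8)) (x ^ 2 / 8) := (hC1 _ hsx).hasDerivAt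
  have hC' : HasDerivAt (deriv C) (deriv (deriv C) (x ^ 2 / 8)) (x ^ 2 / 8) :=
    (hC2 _ hsx).hasDerivAt
  -- derivative of g at x
  have hg : HasDerivAt (fun y => C (y ^ 2 / 8) / 2 + (y ^ 2 / 8) * deriv C (y ^ 2 / 8))
      (deriv C (x ^ 2 / 8) * (x / 4) / 2 +
        ((x / 4) * deriv C (x ^ 2 / 8) +
          (x ^ 2 / 8) * (deriv (deriv C) (x ^ 2 / 8) * (x / 4)))) x := by
    have h1 := (hC.comp x (hq x)).div_const 2
    have h2 := (hq x).mul (hC'.comp x (hq x))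
    have := h1.add h2
    exact this
  have h2nd : deriv (deriv (fun u => (u / 2) * C (u ^ 2 / 8))) x =
      deriv C (x ^ 2 / 8) * (x / 4) / 2 +
        ((x / 4) * deriv C (x ^ 2 / 8) +
          (x ^ 2 / 8) * (deriv (deriv C) (x ^ 2 / 8) * (x / 4))) := by
    rw [Filter.EventuallyEq.deriv_eq heq]
    exact hg.deriv
  rw [h2nd, hderiv1 x hx, hode _ hsx]
  have hCx : C (x ^ 2 / 8) ≠ 0 := hC0 _ hsx
  have hxne : x ≠ 0 := hx0.ne'
  field_simp
  ring
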